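/- (Easy case of Theorem 2, Rendl–Wolkowicz) Suppose a is not orthogonal to the eigenspace of λmin(A) (the easy case). Then for every t ∈ ℝ, every nonzero eigenvector y(t) of D(t) corresponding to λmin(D(t)) has nonzero first component y0(t) ≠ 0. -/

import Mathlib

open Matrix

/-- The smallest eigenvalue of a real (symmetric) matrix. -/
noncomputable def lambdaMin {ι : Type} [Fintype ι] (M : Matrix ι ι ℝ) : ℝ :=
  sInf {μ : ℝ | ∃ v : ι → ℝ, v ≠ 0 ∧ M.mulVec v = μ • v}

/-- The multiplicity of the smallest eigenvalue: the dimension of Null(M - λmin(M)·I). -/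
noncomputable def eigMult {ι : Type} [Fintype ι] [DecidableEq ι] (M : Matrix ι ι ℝ) : ℕ :=
  Module.finrank ℝ (LinearMap.ker (M - lambdaMin M • (1 : Matrix ι ι ℝ)).mulVecLin)

/-- The bordered matrix D(t) = [[t, -aᵀ],[-a, A]]. -/
noncomputable def borderD {n : ℕ} (A : Matrix (Fin n) (Fin n) ℝ) (a : Fin n → ℝ) (t : ℝ) :
    Matrix (Unit ⊕ Fin n) (Unit ⊕ Fin n) ℝ :=
  Matrix.fromBlocks (Matrix.of fun (_ : Unit) (_ : Unit) => t)
    (Matrix.of fun (_ : Unit) (j : Fin n) => -a j)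
    (Matrix.of fun (i : Fin n) (_ : Unit) => -a i) A

/-- The bordered matrix D(t,λ) = [[t, (-a + (λ/2)b)ᵀ],[-a + (λ/2)b, A]]. -/
noncomputable def borderD2 {n : ℕ} (A : Matrix (Fin n) (Fin n) ℝ) (a b : Fin n → ℝ)
    (t l : ℝ) : Matrix (Unit ⊕ Fin n) (Unit ⊕ Fin n) ℝ :=
  borderD A (fun j => a j - (l / 2) * b j) t

/-- The objective xᵀAx - 2aᵀx. -/
noncomputable def objQ {n : ℕ} (A : Matrix (Fin n) (Fin n) ℝ) (a : Fin n → ℝ)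
    (x : Fin n → ℝ) : ℝ :=
  x ⬝ᵥ A.mulVec x - 2 * (a ⬝ᵥ x)

/-- The optimal value p* of eTRS. -/
noncomputable def pstar {n : ℕ} (A : Matrix (Fin n) (Fin n) ℝ) (a b : Fin n → ℝ)
    (c Δ : ℝ) : ℝ :=
  sInf {v : ℝ | ∃ x : Fin n → ℝ, x ⬝ᵥ x ≤ Δ ∧ b ⬝ᵥ x ≤ c ∧ v = objQ A a x}

/-- The Lagrangian of eTRS. -/
noncomputable def lagr {n : ℕ} (A : Matrix (Fin n) (Fin n) ℝ) (a b : Fin n → ℝ)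
    (c Δ : ℝ) (x : Fin n → ℝ) (l1 l2 : ℝ) : ℝ :=
  objQ A a x + l1 * (x ⬝ᵥ x - Δ) + l2 * (b ⬝ᵥ x - c)

/-- The Lagrangian dual value d* of eTRS:
the supremum over λ1, λ2 ≥ 0 of inf_x of the Lagrangian, encoded as the supremum of all
values that are lower bounds of the Lagrangian for some admissible multipliers. -/
noncomputable def dstar {n : ℕ} (A : Matrix (Fin n) (Fin n) ℝ) (a b : Fin n → ℝ)
    (c Δ : ℝ) : ℝ :=
  sSup {v : ℝ | ∃ l1 l2 : ℝ, 0 ≤ l1 ∧ 0 ≤ l2 ∧ ∀ x : Fin n → ℝ, v ≤ lagr A a b c Δ x l1 l2}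

/-- x is a global optimal solution of eTRS. -/
def isOptimal {n : ℕ} (A : Matrix (Fin n) (Fin n) ℝ) (a b : Fin n → ℝ)
    (c Δ : ℝ) (x : Fin n → ℝ) : Prop :=
  x ⬝ᵥ x ≤ Δ ∧ b ⬝ᵥ x ≤ c ∧
    ∀ y : Fin n → ℝ, y ⬝ᵥ y ≤ Δ → b ⬝ᵥ y ≤ c → objQ A a x ≤ objQ A a y

/-- The dual objective k(t,λ) = (Δ+1)·λmin(D(t,λ)) - t - λc. -/
noncomputable def ktl {n : ℕ} (A : Matrix (Fin n) (Fin n) ℝ) (a b : Fin n → ℝ)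
    (c Δ : ℝ) (t l : ℝ) : ℝ :=
  (Δ + 1) * lambdaMin (borderD2 A a b t l) - t - l * c
lemma eigSet_eq {ι : Type} [Fintype ι] [DecidableEq ι] {M : Matrix ι ι ℝ}
    (hM : M.IsHermitian) :
    {μ : ℝ | ∃ v : ι → ℝ, v ≠ 0 ∧ M.mulVec v = μ • v} = Set.range hM.eigenvalues := by
  ext μ
  constructor
  · rintro ⟨v, hv0, hv⟩
    have h1 : Module.End.HasEigenvalue (Matrix.toLinAlgEquiv' M : Module.End ℝ (ι → ℝ)) μ := by
      apply Module.End.hasEigenvalue_of_hasEigenvector (x := v)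
      refine ⟨Module.End.mem_eigenspace_iff.mpr ?_, hv0⟩
      show Matrix.mulVecLin M v = _
      simpa using hv
    have h2 : μ ∈ spectrum ℝ M := by
      rw [← AlgEquiv.spectrum_eq (Matrix.toLinAlgEquiv' (R := ℝ) (n := ι)) M]
      exact Module.End.hasEigenvalue_iff_mem_spectrum.mp h1
    rwa [hM.spectrum_real_eq_range_eigenvalues] at h2
  · rintro ⟨i, rfl⟩
    refine ⟨hM.eigenvectorBasis i, ?_, hM.mulVec_eigenvectorBasis i⟩
    have := hM.eigenvectorBasis.toBasis.ne_zero i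
    rw [OrthonormalBasis.coe_toBasis] at this
    simpa using this

lemma lambdaMin_le {ι : Type} [Fintype ι] [DecidableEq ι] {M : Matrix ι ι ℝ}
    (hM : M.IsHermitian) {μ : ℝ} {v : ι → ℝ} (hv0 : v ≠ 0) (hv : M.mulVec v = μ • v) :
    lambdaMin M ≤ μ := by
  apply csInf_le
  · rw [eigSet_eq hM]; exact (Set.finite_range _).bddBelow
  · exact ⟨v, hv0, hv⟩

lemma lambdaMin_le_eigenvalue {ι : Type} [Fintype ι] [DecidableEq ι] {M : Matrix ι ι ℝ}
    (hM : M.IsHermitian) (i : ι) : lambdaMin M ≤ hM.eigenvalues i := by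
  have h : hM.eigenvalues i ∈ {μ : ℝ | ∃ v : ι → ℝ, v ≠ 0 ∧ M.mulVec v = μ • v} := by
    rw [eigSet_eq hM]; exact ⟨i, rfl⟩
  apply csInf_le _ h
  rw [eigSet_eq hM]; exact (Set.finite_range _).bddBelow

lemma rayleigh_lb {ι : Type} [Fintype ι] [DecidableEq ι] {M : Matrix ι ι ℝ}
    (hM : M.IsHermitian) (w : ι → ℝ) :
    lambdaMin M * (w ⬝ᵥ w) ≤ w ⬝ᵥ M.mulVec w := by
  set U : Matrix ι ι ℝ := (Matrix.IsHermitian.eigenvectorUnitary hM : Matrix ι ι ℝ) with hU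
  have hUU : U * star U = 1 := (Matrix.mem_unitaryGroup_iff).mp (Matrix.IsHermitian.eigenvectorUnitary hM).2
  set u : ι → ℝ := (star U) *ᵥ w with hu
  have hw : U *ᵥ u = w := by
    rw [hu, Matrix.mulVec_mulVec, hUU, Matrix.one_mulVec]
  have hstar : star U = Uᵀ := by
    rw [Matrix.star_eq_conjTranspose]; ext i j; simp [Matrix.conjTranspose_apply]
  have hnorm : w ⬝ᵥ w = u ⬝ᵥ u := by
    conv_lhs => rw [← hw]
    rw [Matrix.dotProduct_mulVec, ← Matrix.mulVec_transpose, ← hstar,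
      Matrix.mulVec_mulVec, (Matrix.mem_unitaryGroup_iff').mp (Matrix.IsHermitian.eigenvectorUnitary hM).2,
      Matrix.one_mulVec]
  have hquad : w ⬝ᵥ M.mulVec w = ∑ i, hM.eigenvalues i * (u i)^2 := by
    conv_lhs => rw [hM.spectral_theorem, Unitary.conjStarAlgAut_apply]
    rw [← Matrix.mulVec_mulVec, ← Matrix.mulVec_mulVec, Matrix.dotProduct_mulVec,
      ← Matrix.mulVec_transpose, ← hstar, ← hu]
    have hd : (Matrix.diagonal (RCLike.ofReal ∘ hM.eigenvalues) : Matrix ι ι ℝ) *ᵥ u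
        = fun i => hM.eigenvalues i * u i := by
      ext i; rw [Matrix.mulVec_diagonal]; simp
    rw [hd]
    simp [dotProduct, pow_two]; ring_nf
    apply Finset.sum_congr rfl; intro i _; ring
  rw [hquad, hnorm, dotProduct, Finset.mul_sum]
  apply Finset.sum_le_sum
  intro i _
  have h1 : lambdaMin M ≤ hM.eigenvalues i := lambdaMin_le_eigenvalue hM i
  nlinarith [sq_nonneg (u i)]

lemma borderD_isHermitian {n : ℕ} {A : Matrix (Fin n) (Fin n) ℝ} (hA : A.IsHermitian)
    (a : Fin n → ℝ) (t : ℝ) : (borderD A a t).IsHermitian := by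
  apply Matrix.IsHermitian.fromBlocks _ _ hA
  · ext i j; simp [Matrix.conjTranspose_apply]
  · ext i j; simp [Matrix.conjTranspose_apply]

lemma borderD_mulVec_inl {n : ℕ} (A : Matrix (Fin n) (Fin n) ℝ) (a : Fin n → ℝ) (t : ℝ)
    (y : Unit ⊕ Fin n → ℝ) :
    (borderD A a t).mulVec y (Sum.inl ()) =
      t * y (Sum.inl ()) - a ⬝ᵥ (fun i => y (Sum.inr i)) := by
  simp [borderD, Matrix.mulVec, dotProduct, Fintype.sum_sum_type, Matrix.fromBlocks,
    sub_eq_add_neg, Finset.sum_neg_distrib]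

lemma borderD_mulVec_inr {n : ℕ} (A : Matrix (Fin n) (Fin n) ℝ) (a : Fin n → ℝ) (t : ℝ)
    (y : Unit ⊕ Fin n → ℝ) (i : Fin n) :
    (borderD A a t).mulVec y (Sum.inr i) =
      -(a i) * y (Sum.inl ()) + A.mulVec (fun j => y (Sum.inr j)) i := by
  simp [borderD, Matrix.mulVec, dotProduct, Fintype.sum_sum_type, Matrix.fromBlocks]

lemma dot_sum_elim {n : ℕ} (s : ℝ) (v : Fin n → ℝ) (w : Unit ⊕ Fin n → ℝ) :
    (Sum.elim (fun _ => s) v : Unit ⊕ Fin n → ℝ) ⬝ᵥ w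
      = s * w (Sum.inl ()) + v ⬝ᵥ (fun i => w (Sum.inr i)) := by
  simp [dotProduct, Fintype.sum_sum_type]

/-- Easy case of Theorem 2 (Rendl–Wolkowicz). -/
theorem stmt2 {n : ℕ} (hn : 1 ≤ n) (A : Matrix (Fin n) (Fin n) ℝ) (hA : A.IsHermitian)
    (a : Fin n → ℝ) (Δ : ℝ) (hΔ : 0 < Δ)
    (heasy : ∃ v : Fin n → ℝ, A.mulVec v = lambdaMin A • v ∧ a ⬝ᵥ v ≠ 0) :
    ∀ t : ℝ, ∀ y : Unit ⊕ Fin n → ℝ, y ≠ 0 →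
      (borderD A a t).mulVec y = lambdaMin (borderD A a t) • y →
      y (Sum.inl ()) ≠ 0 := by
  intro t y hy0 heig h0
  obtain ⟨v, hv, hav⟩ := heasy
  set lD := lambdaMin (borderD A a t) with hlD
  set lA := lambdaMin A with hlA
  -- the tail z of y is a nonzero eigenvector of A with eigenvalue lD
  set z : Fin n → ℝ := fun i => y (Sum.inr i) with hz
  have hz0 : z ≠ 0 := by
    intro h
    apply hy0
    funext j
    cases j with
    | inl u => cases u; exact h0
    | inr i => exact congrFun h i
  have hAz : A.mulVec z = lD • z := by
    funext i
    have h1 := congrFun heig (Sum.inr i)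
    rw [borderD_mulVec_inr] at h1
    simpa [h0, hz] using h1
  have hle : lA ≤ lD := lambdaMin_le hA hz0 hAz
  -- Rayleigh quotient test vector
  set d := |t - lA| with hd
  have hd0 : (0:ℝ) ≤ d := abs_nonneg _
  have hdt : t - lA ≤ d := le_abs_self _
  set c : ℝ := 1 / (d + 1) with hc
  have hc0 : 0 < c := by positivity
  have hc1 : c * (d + 1) = 1 := by
    rw [hc]; field_simp
  set K := a ⬝ᵥ v with hK
  have hK2 : 0 < K ^ 2 := by positivity
  set s := c * K with hs
  set w : Unit ⊕ Fin n → ℝ := Sum.elim (fun _ => s) v with hw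
  have hvv : (0:ℝ) ≤ v ⬝ᵥ v := Finset.sum_nonneg fun i _ => mul_self_nonneg _
  have hww : w ⬝ᵥ w = s ^ 2 + v ⬝ᵥ v := by
    rw [hw, dot_sum_elim]
    simp [pow_two]
  have hDw : w ⬝ᵥ (borderD A a t).mulVec w = t * s ^ 2 - 2 * s * K + lA * (v ⬝ᵥ v) := by
    rw [hw, dot_sum_elim, borderD_mulVec_inl]
    have h2 : (fun i => (borderD A a t).mulVec (Sum.elim (fun _ => s) v) (Sum.inr i))
        = (-s) • a + lA • v := by
      funext i
      rw [borderD_mulVec_inr]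
      simp only [Sum.elim_inl, Sum.elim_inr]
      have hv' : (A *ᵥ fun j => v j) = lA • v := hv
      rw [hv']
      simp
      ring
    rw [h2, dotProduct_add, dotProduct_smul, dotProduct_smul]
    simp only [Sum.elim_inl, Sum.elim_inr, smul_eq_mul]
    rw [dotProduct_comm v a, ← hK]
    ring
  have hray := rayleigh_lb (borderD_isHermitian hA a t) w
  rw [hww, hDw, ← hlD] at hray
  -- chain of inequalities
  have hstep : lA * (s ^ 2 + v ⬝ᵥ v) ≤ t * s ^ 2 - 2 * s * K + lA * (v ⬝ᵥ v) := by
    calc lA * (s ^ 2 + v ⬝ᵥ v) ≤ lD * (s ^ 2 + v ⬝ᵥ v) := by nlinarith [sq_nonneg s]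
      _ ≤ _ := hray
  have hs2 : s ^ 2 = c ^ 2 * K ^ 2 := by rw [hs]; ring
  have hsK : s * K = c * K ^ 2 := by rw [hs]; ring
  have hkey : 2 * (c * K ^ 2) ≤ d * (c ^ 2 * K ^ 2) := by
    nlinarith [mul_nonneg (by linarith : (0:ℝ) ≤ d - (t - lA)) (sq_nonneg s)]
  have hdc : d * c = 1 - c := by linarith [hc1]
  have hprod : d * (c ^ 2 * K ^ 2) = (1 - c) * (c * K ^ 2) := by
    rw [← hdc]; ring
  rw [hprod] at hkey
  nlinarith [mul_pos hc0 hK2]
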